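/- Let m ≥ 2 and let S ⊆ ℤᵐ be closed under componentwise maximum and satisfy the Delgado collision property: whenever β, β' ∈ S with β ≠ β' and β_i = β'_i for some index i, there exists γ ∈ S with γ_i < β_i and γ_k ≤ max{β_k, β'_k} for all k ≠ i, with equality whenever β_k ≠ β'_k. Suppose α ∈ ℤᵐ and there is an index i such that S ∩ ∇̄_{{i}}(α) = ∅ and S ∩ ∇̄_{{i,j}}(α) ≠ ∅ for every j ≠ i. Then: (a) α ∈ S; (b) S ∩ ∇̄_{{k}}(α) = ∅ for every index k; and (c) S ∩ ∇̄_J(α) ≠ ∅ for every subset J ⊊ {1,…,m} with #J ≥ 2. (That is, α is a relative maximal element of S.) -/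

import Mathlib

/-- ∇̄_J(α) for J ⊆ {1,…,m}: agree with α on J, strictly smaller off J. -/
def nabJ (m : ℕ) (J : Finset (Fin m)) (α : Fin m → ℤ) : Set (Fin m → ℤ) :=
  {x | (∀ j ∈ J, x j = α j) ∧ ∀ k ∉ J, x k < α k}

/-- The Delgado collision property. -/
def Delgado (m : ℕ) (S : Set (Fin m → ℤ)) : Prop :=
  ∀ β ∈ S, ∀ β' ∈ S, β ≠ β' → ∀ i : Fin m, β i = β' i →
    ∃ γ ∈ S, γ i < β i ∧ ∀ k, k ≠ i →
      (γ k ≤ max (β k) (β' k) ∧ (β k ≠ β' k → γ k = max (β k) (β' k)))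

theorem stmt6 (m : ℕ) (hm : 2 ≤ m) (S : Set (Fin m → ℤ))
    (hlub : ∀ x ∈ S, ∀ y ∈ S, (fun k => max (x k) (y k)) ∈ S)
    (hS : Delgado m S) (α : Fin m → ℤ) (i : Fin m)
    (hi : S ∩ nabJ m {i} α = ∅)
    (hij : ∀ j : Fin m, j ≠ i → (S ∩ nabJ m {i, j} α).Nonempty) :
    α ∈ S ∧ (∀ k : Fin m, S ∩ nabJ m {k} α = ∅) ∧
    (∀ J : Finset (Fin m), J ⊂ Finset.univ → 2 ≤ J.card →
      (S ∩ nabJ m J α).Nonempty) := by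
  classical
  haveI hnt : Nontrivial (Fin m) := Fin.nontrivial_iff_two_le.mpr hm
  -- choose witnesses β^j ∈ S ∩ ∇̄_{i,j}(α)
  have hβ : ∀ j : Fin m, ∃ β : Fin m → ℤ, j ≠ i →
      β ∈ S ∧ β i = α i ∧ β j = α j ∧ ∀ k, k ≠ i → k ≠ j → β k < α k := by
    intro j
    by_cases hj : j = i
    · exact ⟨α, fun h => absurd hj h⟩
    · obtain ⟨β, hβS, hβ1, hβ2⟩ := hij j hj
      exact ⟨β, fun _ => ⟨hβS, hβ1 i (by simp), hβ1 j (by simp),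
        fun k hk1 hk2 => hβ2 k (by simp [hk1, hk2])⟩⟩
  choose B hB using hβ
  -- S is closed under finite sups
  have hsup_mem : ∀ (T : Finset (Fin m)) (hT : T.Nonempty) (C : Fin m → Fin m → ℤ),
      (∀ j ∈ T, C j ∈ S) → T.sup' hT C ∈ S := by
    intro T hT C hC
    refine Finset.sup'_induction hT C (fun x hx y hy => ?_) hC
    have h : x ⊔ y = fun k => max (x k) (y k) := by
      funext k; simp [Pi.sup_apply]
    rw [h]; exact hlub x hx y hy
  -- part (a) : α ∈ S
  have hT : (Finset.univ.erase i).Nonempty := by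
    obtain ⟨j, hj⟩ := exists_ne i
    exact ⟨j, Finset.mem_erase.mpr ⟨hj, Finset.mem_univ j⟩⟩
  have hαS : α ∈ S := by
    have hmem := hsup_mem _ hT B (fun j hj => (hB j (Finset.mem_erase.mp hj).1).1)
    have heq : (Finset.univ.erase i).sup' hT B = α := by
      funext k
      rw [Finset.sup'_apply]
      apply le_antisymm
      · apply Finset.sup'_le
        intro j hj
        have hji := (Finset.mem_erase.mp hj).1
        obtain ⟨_, hBi, hBj, hBlt⟩ := hB j hji
        by_cases hk : k = i
        · subst hk; exact le_of_eq hBi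
        · by_cases hkj : k = j
          · subst hkj; exact le_of_eq hBj
          · exact le_of_lt (hBlt k hk hkj)
      · by_cases hk : k = i
        · obtain ⟨j, hj⟩ := hT
          rw [hk]
          calc α i = B j i := ((hB j (Finset.mem_erase.mp hj).1).2.1).symm
            _ ≤ _ := Finset.le_sup' (fun a => B a i) hj
        · have hkT : k ∈ Finset.univ.erase i := Finset.mem_erase.mpr ⟨hk, Finset.mem_univ k⟩
          calc α k = B k k := ((hB k hk).2.2.1).symm
            _ ≤ _ := Finset.le_sup' (fun a => B a k) hkT
    rw [heq] at hmem; exact hmem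
  -- part (b)
  have hb : ∀ k : Fin m, S ∩ nabJ m {k} α = ∅ := by
    intro k
    by_cases hk : k = i
    · subst hk; exact hi
    · rw [Set.eq_empty_iff_forall_notMem]
      rintro x ⟨hxS, hx1, hx2⟩
      have hxk : x k = α k := hx1 k (Finset.mem_singleton_self k)
      have hxlt : ∀ l, l ≠ k → x l < α l := fun l hl => hx2 l (by simp [hl])
      obtain ⟨hBS', hBi, hBk, hBlt⟩ := hB k hk
      have hne : x ≠ B k := by
        intro h
        have h1 := hxlt i (Ne.symm hk)
        rw [h, hBi] at h1; exact lt_irrefl _ h1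
      obtain ⟨γ, hγS, hγk, hγ⟩ := hS x hxS (B k) hBS' hne k (by rw [hxk, hBk])
      have hγi : γ i = α i := by
        have h := (hγ i (Ne.symm hk)).2
          (by rw [hBi]; exact ne_of_lt (hxlt i (Ne.symm hk)))
        rw [h, hBi]
        exact max_eq_right (le_of_lt (hxlt i (Ne.symm hk)))
      have hmem : γ ∈ S ∩ nabJ m {i} α := by
        refine ⟨hγS, fun j hj => ?_, fun l hl => ?_⟩
        · rw [Finset.mem_singleton] at hj; subst hj; exact hγi
        · rw [Finset.mem_singleton] at hl
          by_cases hlk : l = k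
          · subst hlk; rw [← hxk]; exact hγk
          · exact lt_of_le_of_lt (hγ l hlk).1 (max_lt (hxlt l hlk) (hBlt l hl hlk))
      rw [hi] at hmem; exact hmem
  -- key: every pair nabla is nonempty
  have hpair : ∀ a b : Fin m, a ≠ b → ∃ e : Fin m → ℤ, e ∈ S ∧ e a = α a ∧ e b = α b ∧
      ∀ k, k ≠ a → k ≠ b → e k < α k := by
    intro a b hab
    by_cases ha : a = i
    · subst ha
      obtain ⟨β, hβS, h1, h2⟩ := hij b (Ne.symm hab)
      exact ⟨β, hβS, h1 a (by simp), h1 b (by simp),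
        fun k hk1 hk2 => h2 k (by simp [hk1, hk2])⟩
    · by_cases hbi : b = i
      · obtain ⟨β, hβS, h1, h2⟩ := hij a ha
        refine ⟨β, hβS, h1 a (by simp), ?_, ?_⟩
        · rw [hbi]; exact h1 i (by simp)
        · intro k hk1 hk2
          have hki : k ≠ i := by rw [← hbi]; exact hk2
          exact h2 k (by simp [hk1, hki])
      · obtain ⟨haS, hai, haa, halt⟩ := hB a ha
        obtain ⟨hbS, hbi', hbb, hblt⟩ := hB b hbi
        have hne : B a ≠ B b := by
          intro h
          have h1 : B b a < α a := hblt a ha hab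
          rw [← h, haa] at h1; exact lt_irrefl _ h1
        obtain ⟨γ, hγS, hγi, hγ⟩ := hS (B a) haS (B b) hbS hne i (by rw [hai, hbi'])
        refine ⟨γ, hγS, ?_, ?_, ?_⟩
        · have h := (hγ a ha).2
            (by rw [haa]; exact (ne_of_lt (hblt a ha hab)).symm)
          rw [h, haa]
          exact max_eq_left (le_of_lt (hblt a ha hab))
        · have h := (hγ b hbi).2
            (by rw [hbb]; exact ne_of_lt (halt b hbi (Ne.symm hab)))
          rw [h, hbb]
          exact max_eq_right (le_of_lt (halt b hbi (Ne.symm hab)))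
        · intro k hk1 hk2
          by_cases hki : k = i
          · subst hki; rw [← hai]; exact hγi
          · exact lt_of_le_of_lt (hγ k hki).1 (max_lt (halt k hki hk1) (hblt k hki hk2))
  -- part (c)
  refine ⟨hαS, hb, ?_⟩
  intro J _hJ hcard
  have hJne : J.Nonempty := Finset.card_pos.mp (Nat.lt_of_lt_of_le Nat.zero_lt_two hcard)
  have hp' : ∀ j : Fin m, ∃ j', j ∈ J → j' ∈ J ∧ j' ≠ j := by
    intro j
    by_cases hj : j ∈ J
    · obtain ⟨j', hj'1, hj'2⟩ := Finset.exists_mem_ne (s := J) (by omega) j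
      exact ⟨j', fun _ => ⟨hj'1, hj'2⟩⟩
    · exact ⟨j, fun h => absurd h hj⟩
  choose p hp using hp'
  have he' : ∀ j : Fin m, ∃ e : Fin m → ℤ, j ∈ J → e ∈ S ∧ e j = α j ∧
      e (p j) = α (p j) ∧ ∀ k, k ≠ j → k ≠ p j → e k < α k := by
    intro j
    by_cases hj : j ∈ J
    · obtain ⟨e, heS, h1, h2, h3⟩ := hpair j (p j) (Ne.symm (hp j hj).2)
      exact ⟨e, fun _ => ⟨heS, h1, h2, h3⟩⟩
    · exact ⟨α, fun h => absurd h hj⟩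
  choose e he using he'
  have hxS : J.sup' hJne e ∈ S := hsup_mem J hJne e (fun j hj => (he j hj).1)
  refine ⟨J.sup' hJne e, hxS, fun j hj => ?_, fun k hk => ?_⟩
  · rw [Finset.sup'_apply]
    apply le_antisymm
    · apply Finset.sup'_le
      intro j' hj'
      obtain ⟨_, h1, h2, h3⟩ := he j' hj'
      by_cases hjj : j = j'
      · subst hjj; exact le_of_eq h1
      · by_cases hjp : j = p j'
        · rw [hjp]; exact le_of_eq h2
        · exact le_of_lt (h3 j hjj hjp)
    · calc α j = e j j := ((he j hj).2.1).symm
        _ ≤ _ := Finset.le_sup' (fun a => e a j) hj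
  · rw [Finset.sup'_apply, Finset.sup'_lt_iff]
    intro j hj
    obtain ⟨_, _, _, h3⟩ := he j hj
    exact h3 k (fun h => hk (by rw [h]; exact hj)) (fun h => hk (by rw [h]; exact (hp j hj).1))
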